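/- Let H be a Hermitian matrix on a finite-dimensional complex Hilbert space with spectral decomposition H = Σ_j E_j Π_j (distinct real eigenvalues E_j, orthogonal spectral projections Π_j), let σ > 0, and let g_σ(t) = (2πσ²)^{−1/2} e^{−t²/(2σ²)} be the centered Gaussian density. Then for every complex matrix ρ, the Gaussian stabilization channel satisfies ∫_ℝ g_σ(t) e^{−iHt} ρ e^{iHt} dt = Σ_{i,j} e^{−σ²(E_i−E_j)²/2} Π_i ρ Π_j; in particular 𝒢_σ suppresses the off-diagonal blocks of ρ in the eigenbasis of H by the factor e^{−σ²(E_i−E_j)²/2}. -/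

import Mathlib

open MeasureTheory Matrix
open scoped ComplexOrder

noncomputable section

attribute [local instance] Matrix.frobeniusNormedAddCommGroup Matrix.frobeniusNormedSpace
attribute [local instance] Matrix.frobeniusNormedRing Matrix.frobeniusNormedAlgebra

lemma aux_exp_spectral {n m : ℕ} (E : Fin m → ℝ) (P : Fin m → Matrix (Fin n) (Fin n) ℂ)
    (hOrth : ∀ j k, P j * P k = if j = k then P j else 0)
    (hSum : ∑ j, P j = 1) (c : ℂ) :
    NormedSpace.exp (∑ j, (c * E j) • P j) = ∑ j, Complex.exp (c * E j) • P j := by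
  let φ : (Fin m → ℂ) →+* Matrix (Fin n) (Fin n) ℂ :=
  { toFun := fun a => ∑ j, a j • P j
    map_one' := by simp [hSum]
    map_mul' := by
      intro a b
      show (∑ j, (a j * b j) • P j) = (∑ j, a j • P j) * (∑ j, b j • P j)
      rw [Finset.sum_mul_sum]
      simp only [Matrix.smul_mul, Matrix.mul_smul, smul_smul, hOrth, smul_ite, smul_zero]
      simp [Finset.sum_ite_eq, mul_comm]
    map_zero' := by simp
    map_add' := by intro a b; simp [add_smul, Finset.sum_add_distrib] }
  have hφc : Continuous φ := by
    show Continuous fun a : Fin m → ℂ => ∑ j, a j • P j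
    exact continuous_finset_sum _ fun j _ => (continuous_apply j).smul continuous_const
  have key := NormedSpace.map_exp φ hφc (fun j => c * E j)
  have h1 : φ (fun j => c * E j) = ∑ j, (c * E j) • P j := rfl
  rw [h1] at key
  refine Eq.trans key.symm ?_
  show (∑ j, (NormedSpace.exp fun j => c * E j) j • P j) = _
  congr 1
  ext j
  rw [Pi.exp_def, Complex.exp_eq_exp_ℂ]

lemma aux_rw (σ : ℝ) (a : ℝ) : ∀ t : ℝ,
    ((Real.sqrt (2*Real.pi*σ^2))⁻¹ * Real.exp (-t^2/(2*σ^2))) • Complex.exp (-(Complex.I * a) * t)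
      = ((Real.sqrt (2*Real.pi*σ^2))⁻¹ : ℂ) *
        Complex.exp (-((1/(2*σ^2) : ℝ) : ℂ) * t^2 + -(Complex.I * a) * t + 0) := by
  intro t
  rw [Complex.real_smul, Complex.ofReal_mul, Complex.ofReal_exp, mul_assoc, ← Complex.exp_add]
  congr 2 <;> push_cast <;> ring

lemma aux_integrable (σ : ℝ) (hσ : 0 < σ) (a : ℝ) :
    Integrable (fun t : ℝ =>
      ((Real.sqrt (2*Real.pi*σ^2))⁻¹ * Real.exp (-t^2/(2*σ^2))) • Complex.exp (-(Complex.I * a) * t)) := by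
  simp only [aux_rw σ a]
  have hb : (0:ℝ) < ((((1/(2*σ^2) : ℝ)) : ℂ)).re := by
    simp only [Complex.ofReal_re]; positivity
  exact (integrable_cexp_quadratic hb (-(Complex.I * a)) 0).const_mul _

lemma aux_integral (σ : ℝ) (hσ : 0 < σ) (a : ℝ) :
    ∫ t : ℝ, ((Real.sqrt (2*Real.pi*σ^2))⁻¹ * Real.exp (-t^2/(2*σ^2))) • Complex.exp (-(Complex.I * a) * t)
      = ((Real.exp (-σ^2 * a^2 / 2) : ℝ) : ℂ) := by
  simp only [aux_rw σ a]
  rw [MeasureTheory.integral_const_mul]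
  have hb : ((-(((1/(2*σ^2) : ℝ)) : ℂ))).re < 0 := by
    simp only [Complex.neg_re, Complex.ofReal_re]
    have : (0:ℝ) < 1/(2*σ^2) := by positivity
    linarith
  rw [integral_cexp_quadratic hb (-(Complex.I * a)) 0]
  have hσ2 : ((σ:ℂ)) ≠ 0 := by exact_mod_cast hσ.ne'
  have hπ : (0:ℝ) < 2*Real.pi*σ^2 := by positivity
  have harg : (0 : ℂ) - (-(Complex.I * a))^2/(4 * -(((1/(2*σ^2) : ℝ)) : ℂ)) = ((-σ^2 * a^2 / 2 : ℝ) : ℂ) := by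
    have hI : (Complex.I * a)^2 = -((a:ℂ)^2) := by
      rw [mul_pow, Complex.I_sq]; ring
    push_cast
    rw [neg_pow, hI]
    field_simp
    ring
  rw [harg, ← Complex.ofReal_exp]
  have hdiv : (↑Real.pi / -(-(((1/(2*σ^2) : ℝ)) : ℂ))) = ((2*Real.pi*σ^2 : ℝ) : ℂ) := by
    push_cast
    rw [neg_neg]
    field_simp
  rw [hdiv]
  have hpow : ((2*Real.pi*σ^2 : ℝ) : ℂ) ^ (1/2 : ℂ) = ((Real.sqrt (2*Real.pi*σ^2) : ℝ) : ℂ) := by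
    rw [show ((1:ℂ)/2) = ((1/2 : ℝ) : ℂ) by norm_num, ← Complex.ofReal_cpow hπ.le,
      ← Real.sqrt_eq_rpow]
  rw [hpow, ← mul_assoc,
    inv_mul_cancel₀ (Complex.ofReal_ne_zero.mpr (by positivity : Real.sqrt (2*Real.pi*σ^2) ≠ 0)),
    one_mul]

/-- Gaussian stabilization suppresses off-diagonal blocks:
`∫ g_σ(t) e^{−iHt} ρ e^{iHt} dt = Σ_{i,j} e^{−σ²(E_i−E_j)²/2} Π_i ρ Π_j`. -/
theorem gaussian_stabilization_eq_dephased_sum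
    {n m : ℕ} (H : Matrix (Fin n) (Fin n) ℂ)
    (E : Fin m → ℝ) (P : Fin m → Matrix (Fin n) (Fin n) ℂ)
    (hE : Function.Injective E)
    (hHerm : ∀ j, (P j)ᴴ = P j)
    (hOrth : ∀ j k, P j * P k = if j = k then P j else 0)
    (hSum : ∑ j, P j = 1)
    (hH : H = ∑ j, (E j : ℂ) • P j)
    (σ : ℝ) (hσ : 0 < σ) (ρ : Matrix (Fin n) (Fin n) ℂ) :
    (∫ t : ℝ, ((Real.sqrt (2 * Real.pi * σ ^ 2))⁻¹ * Real.exp (-t ^ 2 / (2 * σ ^ 2))) •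
        (NormedSpace.exp ((-(Complex.I * (t : ℂ))) • H) * ρ *
          NormedSpace.exp ((Complex.I * (t : ℂ)) • H))) =
      ∑ i, ∑ j, Real.exp (-σ ^ 2 * (E i - E j) ^ 2 / 2) • (P i * ρ * P j) := by
  have hexp : ∀ c : ℂ, NormedSpace.exp (c • H) = ∑ j, Complex.exp (c * E j) • P j := by
    intro c
    rw [hH, Finset.smul_sum]
    simp_rw [smul_smul]
    exact aux_exp_spectral E P hOrth hSum c
  have hint : ∀ t : ℝ,
      ((Real.sqrt (2 * Real.pi * σ ^ 2))⁻¹ * Real.exp (-t ^ 2 / (2 * σ ^ 2))) •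
        (NormedSpace.exp ((-(Complex.I * (t : ℂ))) • H) * ρ *
          NormedSpace.exp ((Complex.I * (t : ℂ)) • H)) =
      ∑ i, ∑ j, (((Real.sqrt (2 * Real.pi * σ ^ 2))⁻¹ * Real.exp (-t ^ 2 / (2 * σ ^ 2))) •
          Complex.exp (-(Complex.I * ((E i - E j : ℝ) : ℂ)) * t)) • (P i * ρ * P j) := by
    intro t
    rw [hexp, hexp]
    simp only [Finset.sum_mul, Finset.mul_sum, Matrix.smul_mul, Matrix.mul_smul, smul_smul,
      Finset.smul_sum, smul_assoc]
    rw [Finset.sum_comm]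
    refine Finset.sum_congr rfl fun i _ => Finset.sum_congr rfl fun j _ => ?_
    congr 2
    rw [← Complex.exp_add]
    congr 1
    push_cast
    ring
  simp only [hint]
  rw [MeasureTheory.integral_finset_sum _ (fun i _ => integrable_finset_sum _
    (fun j _ => (aux_integrable σ hσ (E i - E j)).smul_const _))]
  refine Finset.sum_congr rfl fun i _ => ?_
  rw [MeasureTheory.integral_finset_sum _
    (fun j _ => (aux_integrable σ hσ (E i - E j)).smul_const _)]
  refine Finset.sum_congr rfl fun j _ => ?_
  rw [integral_smul_const, aux_integral σ hσ (E i - E j),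
    ← smul_one_smul ℂ (Real.exp (-σ ^ 2 * (E i - E j) ^ 2 / 2)) (P i * ρ * P j),
    Complex.real_smul, mul_one]
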